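/- The SMP fixed-point characterization: λ' minimizes the dual objective L over the block of coordinates {λ_{e,i}(x) : e ∈ N_i, x ∈ χ} if and only if S_{e,i}^{λ'}(x) = μ_i^{λ'}(x) for all e ∈ N_i and x ∈ χ; moreover the explicit additive form δ_{e,i}(x) = (1/η)log S_{e,i}^λ(x) - (1/(η(|N_i|+1)))log(μ_i^λ(x)∏_{e'∈N_i}S_{e',i}^λ(x)) achieves this. -/

import Mathlib

open Finset

noncomputable section

variable {n m d : ℕ}

/-- The endpoint of edge `e` at side `s`. -/
def ep (ends : Fin m → Fin n × Fin n) (e : Fin m) (s : Fin 2) : Fin n :=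
  if s = 0 then (ends e).1 else (ends e).2

/-- Unnormalized vertex factor. -/
def vExp (η : ℝ) (ends : Fin m → Fin n × Fin n) (Ci : Fin n → Fin d → ℝ)
    (lam : Fin m → Fin 2 → Fin d → ℝ) (i : Fin n) (x : Fin d) : ℝ :=
  Real.exp (η * (-(Ci i x) +
    ∑ e, ∑ s, if ep ends e s = i then lam e s x else 0))

/-- Unnormalized edge factor. -/
def eExp (η : ℝ) (Ce : Fin m → Fin d → Fin d → ℝ)
    (lam : Fin m → Fin 2 → Fin d → ℝ) (e : Fin m) (x₁ x₂ : Fin d) : ℝ :=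
  Real.exp (η * (-(Ce e x₁ x₂) - lam e 0 x₁ - lam e 1 x₂))

/-- Normalized vertex pseudo-marginal `μ_i^λ`. -/
def muV (η : ℝ) (ends : Fin m → Fin n × Fin n) (Ci : Fin n → Fin d → ℝ)
    (lam : Fin m → Fin 2 → Fin d → ℝ) (i : Fin n) (x : Fin d) : ℝ :=
  vExp η ends Ci lam i x / ∑ x', vExp η ends Ci lam i x'

/-- Normalized edge pseudo-marginal `μ_e^λ`. -/
def muE (η : ℝ) (Ce : Fin m → Fin d → Fin d → ℝ)
    (lam : Fin m → Fin 2 → Fin d → ℝ) (e : Fin m) (x₁ x₂ : Fin d) : ℝ :=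
  eExp η Ce lam e x₁ x₂ / ∑ y₁, ∑ y₂, eExp η Ce lam e y₁ y₂

/-- Marginalization `S_{e,i}^λ` of the edge pseudo-marginal onto endpoint `s`. -/
def Smarg (η : ℝ) (Ce : Fin m → Fin d → Fin d → ℝ)
    (lam : Fin m → Fin 2 → Fin d → ℝ) (e : Fin m) (s : Fin 2) (x : Fin d) : ℝ :=
  if s = 0 then ∑ x₂, muE η Ce lam e x x₂ else ∑ x₁, muE η Ce lam e x₁ x

/-- The dual objective `L`. -/
def dualL (η : ℝ) (ends : Fin m → Fin n × Fin n) (Ci : Fin n → Fin d → ℝ)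
    (Ce : Fin m → Fin d → Fin d → ℝ) (lam : Fin m → Fin 2 → Fin d → ℝ) : ℝ :=
  (1 / η) * ∑ i, Real.log (∑ x, vExp η ends Ci lam i x)
    + (1 / η) * ∑ e, Real.log (∑ x₁, ∑ x₂, eExp η Ce lam e x₁ x₂)

/-- The neighborhood block of vertex `i₀`: pairs `(e,s)` with endpoint `i₀`. -/
def nbhd (ends : Fin m → Fin n × Fin n) (i₀ : Fin n) : Finset (Fin m × Fin 2) :=
  Finset.univ.filter (fun p : Fin m × Fin 2 => ep ends p.1 p.2 = i₀)

/-- The explicit SMP update at vertex `i₀`: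
`λ'_{e,i₀}(x) = λ_{e,i₀}(x) + (1/η) log S_{e,i₀}^λ(x)
  - (1/(η(|N_{i₀}|+1))) log (μ_{i₀}^λ(x) ∏_{e'∈N_{i₀}} S_{e',i₀}^λ(x))`. -/
def smpUpdate (η : ℝ) (ends : Fin m → Fin n × Fin n) (Ci : Fin n → Fin d → ℝ)
    (Ce : Fin m → Fin d → Fin d → ℝ) (lam : Fin m → Fin 2 → Fin d → ℝ)
    (i₀ : Fin n) : Fin m → Fin 2 → Fin d → ℝ :=
  fun e s x =>
    if ep ends e s = i₀ then
      lam e s x + (1 / η) * Real.log (Smarg η Ce lam e s x)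
        - (1 / (η * ((nbhd ends i₀).card + 1))) *
            Real.log (muV η ends Ci lam i₀ x *
              ∏ p ∈ nbhd ends i₀, Smarg η Ce lam p.1 p.2 x)
    else lam e s x


-- ===== helpers =====

def sumV (η : ℝ) (ends : Fin m → Fin n × Fin n) (Ci : Fin n → Fin d → ℝ)
    (lam : Fin m → Fin 2 → Fin d → ℝ) (i : Fin n) : ℝ := ∑ x, vExp η ends Ci lam i x

def sumE (η : ℝ) (Ce : Fin m → Fin d → Fin d → ℝ)
    (lam : Fin m → Fin 2 → Fin d → ℝ) (e : Fin m) : ℝ := ∑ x₁, ∑ x₂, eExp η Ce lam e x₁ x₂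

def rowE (η : ℝ) (Ce : Fin m → Fin d → Fin d → ℝ)
    (lam : Fin m → Fin 2 → Fin d → ℝ) (e : Fin m) (s : Fin 2) (x : Fin d) : ℝ :=
  if s = 0 then ∑ y, eExp η Ce lam e x y else ∑ y, eExp η Ce lam e y x

lemma ep_zero (ends : Fin m → Fin n × Fin n) (e : Fin m) : ep ends e 0 = (ends e).1 := rfl

lemma ep_one (ends : Fin m → Fin n × Fin n) (e : Fin m) : ep ends e 1 = (ends e).2 := by
  simp [ep]

lemma vExp_pos (η : ℝ) (ends : Fin m → Fin n × Fin n) (Ci : Fin n → Fin d → ℝ)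
    (lam : Fin m → Fin 2 → Fin d → ℝ) (i : Fin n) (x : Fin d) : 0 < vExp η ends Ci lam i x :=
  Real.exp_pos _

lemma eExp_pos (η : ℝ) (Ce : Fin m → Fin d → Fin d → ℝ)
    (lam : Fin m → Fin 2 → Fin d → ℝ) (e : Fin m) (x₁ x₂ : Fin d) :
    0 < eExp η Ce lam e x₁ x₂ := Real.exp_pos _

lemma sumV_pos (hd0 : 0 < d) (η : ℝ) (ends : Fin m → Fin n × Fin n) (Ci : Fin n → Fin d → ℝ)
    (lam : Fin m → Fin 2 → Fin d → ℝ) (i : Fin n) : 0 < sumV η ends Ci lam i := by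
  haveI : Nonempty (Fin d) := ⟨⟨0, hd0⟩⟩
  exact Finset.sum_pos (fun x _ => vExp_pos _ _ _ _ _ _) univ_nonempty

lemma rowE_pos (hd0 : 0 < d) (η : ℝ) (Ce : Fin m → Fin d → Fin d → ℝ)
    (lam : Fin m → Fin 2 → Fin d → ℝ) (e : Fin m) (s : Fin 2) (x : Fin d) :
    0 < rowE η Ce lam e s x := by
  haveI : Nonempty (Fin d) := ⟨⟨0, hd0⟩⟩
  unfold rowE
  split <;> exact Finset.sum_pos (fun y _ => eExp_pos _ _ _ _ _ _) univ_nonempty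

lemma sumE_pos (hd0 : 0 < d) (η : ℝ) (Ce : Fin m → Fin d → Fin d → ℝ)
    (lam : Fin m → Fin 2 → Fin d → ℝ) (e : Fin m) : 0 < sumE η Ce lam e := by
  haveI : Nonempty (Fin d) := ⟨⟨0, hd0⟩⟩
  exact Finset.sum_pos (fun x _ => Finset.sum_pos (fun y _ => eExp_pos _ _ _ _ _ _) univ_nonempty) univ_nonempty

lemma Smarg_eq (η : ℝ) (Ce : Fin m → Fin d → Fin d → ℝ)
    (lam : Fin m → Fin 2 → Fin d → ℝ) (e : Fin m) (s : Fin 2) (x : Fin d) :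
    Smarg η Ce lam e s x = rowE η Ce lam e s x / sumE η Ce lam e := by
  unfold Smarg rowE muE sumE
  split <;> rw [Finset.sum_div]

lemma Smarg_pos (hd0 : 0 < d) (η : ℝ) (Ce : Fin m → Fin d → Fin d → ℝ)
    (lam : Fin m → Fin 2 → Fin d → ℝ) (e : Fin m) (s : Fin 2) (x : Fin d) :
    0 < Smarg η Ce lam e s x := by
  rw [Smarg_eq]; exact div_pos (rowE_pos hd0 _ _ _ _ _ _) (sumE_pos hd0 _ _ _ _)

lemma muV_pos (hd0 : 0 < d) (η : ℝ) (ends : Fin m → Fin n × Fin n) (Ci : Fin n → Fin d → ℝ)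
    (lam : Fin m → Fin 2 → Fin d → ℝ) (i : Fin n) (x : Fin d) :
    0 < muV η ends Ci lam i x :=
  div_pos (vExp_pos _ _ _ _ _ _) (sumV_pos hd0 _ _ _ _ _)

lemma nbhd_sum (ends : Fin m → Fin n × Fin n) (i : Fin n) (f : Fin m → Fin 2 → ℝ) :
    ∑ p ∈ nbhd ends i, f p.1 p.2 = ∑ e, ∑ s, if ep ends e s = i then f e s else 0 := by
  rw [nbhd, Finset.sum_filter]
  exact Fintype.sum_prod_type _

lemma vExp_nbhd (η : ℝ) (ends : Fin m → Fin n × Fin n) (Ci : Fin n → Fin d → ℝ)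
    (lam : Fin m → Fin 2 → Fin d → ℝ) (i : Fin n) (x : Fin d) :
    vExp η ends Ci lam i x
      = Real.exp (η * (-(Ci i x) + ∑ p ∈ nbhd ends i, lam p.1 p.2 x)) := by
  rw [vExp, nbhd_sum ends i (fun e s => lam e s x)]

lemma vExp_congr (η : ℝ) (ends : Fin m → Fin n × Fin n) (Ci : Fin n → Fin d → ℝ)
    (lam₁ lam₂ : Fin m → Fin 2 → Fin d → ℝ) (i : Fin n) (x : Fin d)
    (h : ∀ e s, ep ends e s = i → lam₁ e s x = lam₂ e s x) :
    vExp η ends Ci lam₁ i x = vExp η ends Ci lam₂ i x := by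
  unfold vExp
  congr 3
  apply Finset.sum_congr rfl
  intro e _
  apply Finset.sum_congr rfl
  intro s _
  by_cases hes : ep ends e s = i
  · simp [hes, h e s hes]
  · simp [hes]

lemma gibbs {d : ℕ} (hd0 : 0 < d) (c t : Fin d → ℝ) (hc : ∀ x, 0 < c x) :
    Real.log (∑ x, c x) + ∑ x, c x / (∑ x', c x') * t x
      ≤ Real.log (∑ x, c x * Real.exp (t x)) := by
  haveI : Nonempty (Fin d) := ⟨⟨0, hd0⟩⟩
  set C := ∑ x, c x with hCdef
  have hC : 0 < C := Finset.sum_pos (fun x _ => hc x) univ_nonempty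
  set T := ∑ x, c x / C * t x with hTdef
  have hCT : C * T = ∑ x, c x * t x := by
    rw [hTdef, Finset.mul_sum]
    apply Finset.sum_congr rfl
    intro x _
    field_simp
  have key : C * Real.exp T ≤ ∑ x, c x * Real.exp (t x) := by
    have hx : ∀ x ∈ (univ : Finset (Fin d)),
        c x * Real.exp T * (1 + (t x - T)) ≤ c x * Real.exp (t x) := by
      intro x _
      have h1 : 1 + (t x - T) ≤ Real.exp (t x - T) := by
        have := Real.add_one_le_exp (t x - T); linarith
      have h2 : c x * Real.exp T * (1 + (t x - T)) ≤ c x * Real.exp T * Real.exp (t x - T) := by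
        exact mul_le_mul_of_nonneg_left h1 (mul_nonneg (hc x).le (Real.exp_pos _).le)
      calc c x * Real.exp T * (1 + (t x - T)) ≤ c x * Real.exp T * Real.exp (t x - T) := h2
        _ = c x * Real.exp (t x) := by rw [mul_assoc, ← Real.exp_add]; ring_nf
    have hsum := Finset.sum_le_sum hx
    have hlhs : ∑ x, c x * Real.exp T * (1 + (t x - T)) = C * Real.exp T := by
      have : ∀ x, c x * Real.exp T * (1 + (t x - T))
          = Real.exp T * c x + Real.exp T * (c x * t x) - (Real.exp T * T) * c x := by
        intro x; ring
      simp only [this]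
      rw [Finset.sum_sub_distrib, Finset.sum_add_distrib, ← Finset.mul_sum, ← Finset.mul_sum,
        ← Finset.mul_sum, ← hCdef, ← hCT]
      ring
    linarith
  have hpos : 0 < ∑ x, c x * Real.exp (t x) :=
    Finset.sum_pos (fun x _ => mul_pos (hc x) (Real.exp_pos _)) univ_nonempty
  calc Real.log C + T = Real.log (C * Real.exp T) := by
        rw [Real.log_mul hC.ne' (Real.exp_pos _).ne', Real.log_exp]
    _ ≤ Real.log (∑ x, c x * Real.exp (t x)) := Real.log_le_log (mul_pos hC (Real.exp_pos _)) key

lemma dual_le_of_matching (η : ℝ) (hη : 0 < η) (hd0 : 0 < d)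
    (ends : Fin m → Fin n × Fin n) (hsimple : ∀ e, (ends e).1 ≠ (ends e).2)
    (Ci : Fin n → Fin d → ℝ) (Ce : Fin m → Fin d → Fin d → ℝ)
    (lam lam' lam'' : Fin m → Fin 2 → Fin d → ℝ) (i₀ : Fin n)
    (h' : ∀ e s x, ep ends e s ≠ i₀ → lam' e s x = lam e s x)
    (h'' : ∀ e s x, ep ends e s ≠ i₀ → lam'' e s x = lam e s x)
    (hmatch : ∀ e s, ep ends e s = i₀ → ∀ x,
      Smarg η Ce lam' e s x = muV η ends Ci lam' i₀ x) :
    dualL η ends Ci Ce lam' ≤ dualL η ends Ci Ce lam'' := by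
  haveI : Nonempty (Fin d) := ⟨⟨0, hd0⟩⟩
  have hagree : ∀ e s x, ep ends e s ≠ i₀ → lam'' e s x = lam' e s x := fun e s x h =>
    (h'' e s x h).trans (h' e s x h).symm
  set D : Fin d → ℝ :=
    fun x => ∑ e, ∑ s, if ep ends e s = i₀ then lam'' e s x - lam' e s x else 0 with hD
  -- vertex factorization
  have hvfac : ∀ x, vExp η ends Ci lam'' i₀ x
      = vExp η ends Ci lam' i₀ x * Real.exp (η * D x) := by
    intro x
    rw [vExp, vExp, ← Real.exp_add, hD]
    congr 1
    have hsplit : ∑ e, ∑ s, (if ep ends e s = i₀ then lam'' e s x else 0)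
        = ∑ e, ∑ s, ((if ep ends e s = i₀ then lam' e s x else 0)
            + (if ep ends e s = i₀ then lam'' e s x - lam' e s x else 0)) := by
      apply Finset.sum_congr rfl; intro e _
      apply Finset.sum_congr rfl; intro s _
      by_cases hes : ep ends e s = i₀ <;> simp [hes]
    rw [hsplit]
    simp only [Finset.sum_add_distrib]
    ring
  -- vertex Gibbs bound
  have hvert : Real.log (sumV η ends Ci lam' i₀) + ∑ x, muV η ends Ci lam' i₀ x * (η * D x)
      ≤ Real.log (sumV η ends Ci lam'' i₀) := by
    have hg := gibbs hd0 (fun x => vExp η ends Ci lam' i₀ x) (fun x => η * D x)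
      (fun x => vExp_pos _ _ _ _ _ _)
    have h1 : sumV η ends Ci lam'' i₀ = ∑ x, vExp η ends Ci lam' i₀ x * Real.exp (η * D x) := by
      rw [sumV]; exact Finset.sum_congr rfl fun x _ => hvfac x
    rw [h1, sumV]
    exact hg
  -- per-edge bound
  have hedge : ∀ e, Real.log (sumE η Ce lam' e)
      + ∑ s, ∑ x, (if ep ends e s = i₀ then
          Smarg η Ce lam' e s x * (η * (lam' e s x - lam'' e s x)) else 0)
      ≤ Real.log (sumE η Ce lam'' e) := by
    intro e
    by_cases h0 : ep ends e 0 = i₀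
    · have h1 : ep ends e 1 ≠ i₀ := by
        rw [ep_one]; rw [ep_zero] at h0; rw [← h0]; exact (hsimple e).symm
      have hfac : ∀ x y, eExp η Ce lam'' e x y
          = eExp η Ce lam' e x y * Real.exp (η * (lam' e 0 x - lam'' e 0 x)) := by
        intro x y
        rw [eExp, eExp, ← Real.exp_add, hagree e 1 y h1]
        congr 1; ring
      have hsum : sumE η Ce lam'' e
          = ∑ x, (∑ y, eExp η Ce lam' e x y) * Real.exp (η * (lam' e 0 x - lam'' e 0 x)) := by
        rw [sumE]
        apply Finset.sum_congr rfl; intro x _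
        rw [Finset.sum_mul]
        exact Finset.sum_congr rfl fun y _ => hfac x y
      have hg := gibbs hd0 (fun x => ∑ y, eExp η Ce lam' e x y)
        (fun x => η * (lam' e 0 x - lam'' e 0 x))
        (fun x => Finset.sum_pos (fun y _ => eExp_pos _ _ _ _ _ _) univ_nonempty)
      rw [hsum]
      have hS : ∀ x, (∑ y, eExp η Ce lam' e x y) / (∑ x', ∑ y, eExp η Ce lam' e x' y)
          = Smarg η Ce lam' e 0 x := by
        intro x; rw [Smarg_eq, rowE, if_pos rfl, sumE]
      calc Real.log (sumE η Ce lam' e)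
            + ∑ s, ∑ x, (if ep ends e s = i₀ then
                Smarg η Ce lam' e s x * (η * (lam' e s x - lam'' e s x)) else 0)
          = Real.log (∑ x, ∑ y, eExp η Ce lam' e x y)
            + ∑ x, (∑ y, eExp η Ce lam' e x y) / (∑ x', ∑ y, eExp η Ce lam' e x' y)
                * (η * (lam' e 0 x - lam'' e 0 x)) := by
            rw [Fin.sum_univ_two]
            simp only [if_pos h0, if_neg h1]
            rw [sumE]
            simp only [hS, Finset.sum_const_zero, add_zero]
        _ ≤ _ := hg
    · by_cases h1 : ep ends e 1 = i₀
      · have hfac : ∀ x y, eExp η Ce lam'' e x y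
            = eExp η Ce lam' e x y * Real.exp (η * (lam' e 1 y - lam'' e 1 y)) := by
          intro x y
          rw [eExp, eExp, ← Real.exp_add, hagree e 0 x h0]
          congr 1; ring
        have hsum : sumE η Ce lam'' e
            = ∑ y, (∑ x, eExp η Ce lam' e x y) * Real.exp (η * (lam' e 1 y - lam'' e 1 y)) := by
          rw [sumE, Finset.sum_comm]
          apply Finset.sum_congr rfl; intro y _
          rw [Finset.sum_mul]
          exact Finset.sum_congr rfl fun x _ => hfac x y
        have hg := gibbs hd0 (fun y => ∑ x, eExp η Ce lam' e x y)
          (fun y => η * (lam' e 1 y - lam'' e 1 y))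
          (fun y => Finset.sum_pos (fun x _ => eExp_pos _ _ _ _ _ _) univ_nonempty)
        rw [hsum]
        have hS : ∀ y, (∑ x, eExp η Ce lam' e x y) / (∑ y', ∑ x, eExp η Ce lam' e x y') =
            Smarg η Ce lam' e 1 y := by
          intro y
          rw [Smarg_eq, rowE, if_neg (by decide : ¬(1 : Fin 2) = 0), sumE]
          congr 1
          rw [Finset.sum_comm]
        calc Real.log (sumE η Ce lam' e)
              + ∑ s, ∑ x, (if ep ends e s = i₀ then
                  Smarg η Ce lam' e s x * (η * (lam' e s x - lam'' e s x)) else 0)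
            = Real.log (∑ y, ∑ x, eExp η Ce lam' e x y)
              + ∑ y, (∑ x, eExp η Ce lam' e x y) / (∑ y', ∑ x, eExp η Ce lam' e x y')
                  * (η * (lam' e 1 y - lam'' e 1 y)) := by
              rw [Fin.sum_univ_two]
              simp only [if_pos h1, if_neg h0]
              rw [sumE, Finset.sum_comm]
              simp only [hS, Finset.sum_const_zero, zero_add]
          _ ≤ _ := hg
      · have hsum : sumE η Ce lam'' e = sumE η Ce lam' e := by
          rw [sumE, sumE]
          apply Finset.sum_congr rfl; intro x _
          apply Finset.sum_congr rfl; intro y _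
          rw [eExp, eExp, hagree e 0 x h0, hagree e 1 y h1]
        rw [hsum]
        simp [h0, h1]
  -- assemble
  have hsplitV : ∑ x, muV η ends Ci lam' i₀ x * (η * D x)
      ≤ ∑ i, Real.log (sumV η ends Ci lam'' i) - ∑ i, Real.log (sumV η ends Ci lam' i) := by
    rw [← Finset.sum_sub_distrib]
    rw [Finset.sum_eq_single_of_mem i₀ (Finset.mem_univ i₀) ?hz]
    · linarith [hvert]
    · intro i _ hi
      have : sumV η ends Ci lam'' i = sumV η ends Ci lam' i := by
        rw [sumV, sumV]
        apply Finset.sum_congr rfl; intro x _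
        exact vExp_congr _ _ _ _ _ _ _ (fun e s hes => hagree e s x (by rw [hes]; exact hi))
      rw [this]; ring
  have hsplitE : ∑ e, ∑ s, ∑ x, (if ep ends e s = i₀ then
        Smarg η Ce lam' e s x * (η * (lam' e s x - lam'' e s x)) else 0)
      ≤ ∑ e, Real.log (sumE η Ce lam'' e) - ∑ e, Real.log (sumE η Ce lam' e) := by
    rw [← Finset.sum_sub_distrib]
    apply Finset.sum_le_sum
    intro e _
    linarith [hedge e]
  have hzero : ∑ x, muV η ends Ci lam' i₀ x * (η * D x)
      + ∑ e, ∑ s, ∑ x, (if ep ends e s = i₀ then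
          Smarg η Ce lam' e s x * (η * (lam' e s x - lam'' e s x)) else 0) = 0 := by
    have h1 : ∑ x, muV η ends Ci lam' i₀ x * (η * D x)
        = ∑ e, ∑ s, ∑ x, (if ep ends e s = i₀ then
            muV η ends Ci lam' i₀ x * (η * (lam'' e s x - lam' e s x)) else 0) := by
      have hx : ∀ x, muV η ends Ci lam' i₀ x * (η * D x)
          = ∑ e, ∑ s, (if ep ends e s = i₀ then
              muV η ends Ci lam' i₀ x * (η * (lam'' e s x - lam' e s x)) else 0) := by
        intro x
        rw [hD]
        simp only [Finset.mul_sum, mul_ite, mul_zero]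
      simp only [hx]
      rw [Finset.sum_comm]
      apply Finset.sum_congr rfl; intro e _
      rw [Finset.sum_comm]
    rw [h1, ← Finset.sum_add_distrib]
    apply Finset.sum_eq_zero
    intro e _
    rw [← Finset.sum_add_distrib]
    apply Finset.sum_eq_zero
    intro s _
    rw [← Finset.sum_add_distrib]
    apply Finset.sum_eq_zero
    intro x _
    by_cases hes : ep ends e s = i₀
    · simp only [if_pos hes, hmatch e s hes x]
      ring
    · simp [hes]
  -- conclude
  rw [dualL, dualL]
  have hstep : ∑ i, Real.log (sumV η ends Ci lam' i) + ∑ e, Real.log (sumE η Ce lam' e)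
      ≤ ∑ i, Real.log (sumV η ends Ci lam'' i) + ∑ e, Real.log (sumE η Ce lam'' e) := by
    linarith [hsplitV, hsplitE, hzero]
  have h1η : 0 < 1 / η := by positivity
  have := mul_le_mul_of_nonneg_left hstep h1η.le
  simp only [sumV, sumE] at this ⊢
  linarith [this]

set_option maxHeartbeats 1000000 in
lemma matching_of_min (η : ℝ) (hη : 0 < η) (hd0 : 0 < d)
    (ends : Fin m → Fin n × Fin n)
    (Ci : Fin n → Fin d → ℝ) (Ce : Fin m → Fin d → Fin d → ℝ)
    (lam lam' : Fin m → Fin 2 → Fin d → ℝ) (i₀ : Fin n)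
    (h' : ∀ e s x, ep ends e s ≠ i₀ → lam' e s x = lam e s x)
    (hmin : ∀ lam'', (∀ e s x, ep ends e s ≠ i₀ → lam'' e s x = lam e s x) →
        dualL η ends Ci Ce lam' ≤ dualL η ends Ci Ce lam'') :
    ∀ e s, ep ends e s = i₀ → ∀ x, Smarg η Ce lam' e s x = muV η ends Ci lam' i₀ x := by
  intro e s hes x₀
  haveI : Nonempty (Fin d) := ⟨⟨0, hd0⟩⟩
  classical
  set pert : ℝ → Fin m → Fin 2 → Fin d → ℝ :=
    fun c e' s' x' => lam' e' s' x' + if e' = e ∧ s' = s ∧ x' = x₀ then c else 0 with hpert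
  have hpert0 : pert 0 = lam' := by funext e' s' x'; simp [hpert]
  have hagree : ∀ c e' s' x', ep ends e' s' ≠ i₀ → pert c e' s' x' = lam e' s' x' := by
    intro c e' s' x' hne
    have hne2 : ¬(e' = e ∧ s' = s ∧ x' = x₀) := by
      rintro ⟨rfl, rfl, rfl⟩; exact hne hes
    simp [hpert, hne2, h' e' s' x' hne]
  set A := sumV η ends Ci lam' i₀ with hAdef
  set V := vExp η ends Ci lam' i₀ x₀ with hVdef
  set B := sumE η Ce lam' e with hBdef
  set R := rowE η Ce lam' e s x₀ with hRdef
  have hApos : 0 < A := sumV_pos hd0 _ _ _ _ _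
  have hBpos : 0 < B := sumE_pos hd0 _ _ _ _
  set CV := ∑ i ∈ Finset.univ.erase i₀, Real.log (sumV η ends Ci lam' i) with hCV
  set CE := ∑ e' ∈ Finset.univ.erase e, Real.log (sumE η Ce lam' e') with hCE
  -- the one-dimensional restriction
  have hψ : ∀ c, dualL η ends Ci Ce (pert c)
      = (1/η) * (Real.log ((A - V) + V * Real.exp (η * c)) + CV)
        + (1/η) * (Real.log ((B - R) + R * Real.exp (-(η * c))) + CE) := by
    intro c
    -- vertex sums
    have hx0 : vExp η ends Ci (pert c) i₀ x₀ = V * Real.exp (η * c) := by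
      rw [hVdef, vExp, vExp, ← Real.exp_add, Real.exp_eq_exp]
      have hinner : ∀ e' s', (if ep ends e' s' = i₀ then pert c e' s' x₀ else 0)
          = (if ep ends e' s' = i₀ then lam' e' s' x₀ else 0)
            + (if e' = e ∧ s' = s then c else 0) := by
        intro e' s'
        by_cases h2 : e' = e ∧ s' = s
        · obtain ⟨rfl, rfl⟩ := h2
          simp [hpert, hes]
        · have h3 : ¬(e' = e ∧ s' = s ∧ x₀ = x₀) := by
            rintro ⟨rfl, rfl, -⟩; exact h2 ⟨rfl, rfl⟩
          by_cases h4 : ep ends e' s' = i₀ <;> simp [hpert, h2, h3, h4]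
      simp only [hinner, Finset.sum_add_distrib]
      have hc : ∑ e' : Fin m, ∑ s' : Fin 2, (if e' = e ∧ s' = s then c else 0) = c := by
        simp [ite_and, Finset.sum_ite_eq']
      rw [hc]
      ring
    have hsumVi0 : sumV η ends Ci (pert c) i₀ = (A - V) + V * Real.exp (η * c) := by
      have hxother : ∀ x ∈ Finset.univ.erase x₀,
          vExp η ends Ci (pert c) i₀ x = vExp η ends Ci lam' i₀ x := by
        intro x hx
        have hxne : x ≠ x₀ := (Finset.mem_erase.mp hx).1
        apply vExp_congr
        intro e' s' _
        have : ¬(e' = e ∧ s' = s ∧ x = x₀) := by rintro ⟨-, -, h⟩; exact hxne h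
        simp [hpert, this]
      rw [sumV, ← Finset.add_sum_erase _ _ (Finset.mem_univ x₀), hx0,
        Finset.sum_congr rfl hxother]
      have hA' : A = V + ∑ x ∈ Finset.univ.erase x₀, vExp η ends Ci lam' i₀ x := by
        rw [hAdef, sumV, ← Finset.add_sum_erase _ _ (Finset.mem_univ x₀), hVdef]
      rw [hA']
      ring
    have hsumVothers : ∀ i ∈ Finset.univ.erase i₀,
        Real.log (sumV η ends Ci (pert c) i) = Real.log (sumV η ends Ci lam' i) := by
      intro i hi
      have hine : i ≠ i₀ := (Finset.mem_erase.mp hi).1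
      have : sumV η ends Ci (pert c) i = sumV η ends Ci lam' i := by
        rw [sumV, sumV]
        apply Finset.sum_congr rfl
        intro x _
        apply vExp_congr
        intro e' s' hepi
        have : ¬(e' = e ∧ s' = s ∧ x = x₀) := by
          rintro ⟨rfl, rfl, -⟩; exact hine (hepi ▸ hes ▸ rfl)
        simp [hpert, this]
      rw [this]
    have hVsum : ∑ i, Real.log (sumV η ends Ci (pert c) i)
        = Real.log ((A - V) + V * Real.exp (η * c)) + CV := by
      rw [← Finset.add_sum_erase _ _ (Finset.mem_univ i₀), hsumVi0,
        Finset.sum_congr rfl hsumVothers]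
    -- edge sums
    have hsumEe : sumE η Ce (pert c) e = (B - R) + R * Real.exp (-(η * c)) := by
      rcases (by omega : s = 0 ∨ s = 1) with rfl | rfl
      · -- s = 0
        have hrow0 : ∑ y, eExp η Ce (pert c) e x₀ y = R * Real.exp (-(η * c)) := by
          rw [hRdef, rowE, if_pos rfl, Finset.sum_mul]
          apply Finset.sum_congr rfl
          intro y _
          rw [eExp, eExp, ← Real.exp_add, Real.exp_eq_exp]
          have h0 : pert c e 0 x₀ = lam' e 0 x₀ + c := by simp [hpert]
          have h1 : pert c e 1 y = lam' e 1 y := by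
            simp [hpert, show ¬((1 : Fin 2) = 0) from by decide]
          rw [h0, h1]
          ring
        have hrowother : ∀ x ∈ Finset.univ.erase x₀,
            ∑ y, eExp η Ce (pert c) e x y = ∑ y, eExp η Ce lam' e x y := by
          intro x hx
          have hxne : x ≠ x₀ := (Finset.mem_erase.mp hx).1
          apply Finset.sum_congr rfl
          intro y _
          rw [eExp, eExp]
          have h0 : pert c e 0 x = lam' e 0 x := by
            simp [hpert, hxne]
          have h1 : pert c e 1 y = lam' e 1 y := by
            simp [hpert, show ¬((1 : Fin 2) = 0) from by decide]
          rw [h0, h1]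
        rw [sumE, ← Finset.add_sum_erase _ _ (Finset.mem_univ x₀), hrow0,
          Finset.sum_congr rfl hrowother]
        have hB' : B = R + ∑ x ∈ Finset.univ.erase x₀, ∑ y, eExp η Ce lam' e x y := by
          rw [hBdef, sumE, ← Finset.add_sum_erase _ _ (Finset.mem_univ x₀), hRdef, rowE,
            if_pos rfl]
        rw [hB']
        ring
      · -- s = 1
        have hrow1 : ∑ y, eExp η Ce (pert c) e y x₀ = R * Real.exp (-(η * c)) := by
          rw [hRdef, rowE, if_neg (by decide : ¬(1 : Fin 2) = 0), Finset.sum_mul]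
          apply Finset.sum_congr rfl
          intro y _
          rw [eExp, eExp, ← Real.exp_add, Real.exp_eq_exp]
          have h1 : pert c e 1 x₀ = lam' e 1 x₀ + c := by simp [hpert]
          have h0 : pert c e 0 y = lam' e 0 y := by
            simp [hpert, show ¬((0 : Fin 2) = 1) from by decide]
          rw [h0, h1]
          ring
        have hrowother : ∀ x ∈ Finset.univ.erase x₀,
            ∑ y, eExp η Ce (pert c) e y x = ∑ y, eExp η Ce lam' e y x := by
          intro x hx
          have hxne : x ≠ x₀ := (Finset.mem_erase.mp hx).1
          apply Finset.sum_congr rfl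
          intro y _
          rw [eExp, eExp]
          have h1 : pert c e 1 x = lam' e 1 x := by
            simp [hpert, hxne]
          have h0 : pert c e 0 y = lam' e 0 y := by
            simp [hpert, show ¬((0 : Fin 2) = 1) from by decide]
          rw [h0, h1]
        rw [sumE, Finset.sum_comm, ← Finset.add_sum_erase _ _ (Finset.mem_univ x₀), hrow1,
          Finset.sum_congr rfl hrowother]
        have hB' : B = R + ∑ x ∈ Finset.univ.erase x₀, ∑ y, eExp η Ce lam' e y x := by
          rw [hBdef, sumE, Finset.sum_comm, ← Finset.add_sum_erase _ _ (Finset.mem_univ x₀),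
            hRdef, rowE, if_neg (by decide : ¬(1 : Fin 2) = 0)]
        rw [hB']
        ring
    have hsumEothers : ∀ e' ∈ Finset.univ.erase e,
        Real.log (sumE η Ce (pert c) e') = Real.log (sumE η Ce lam' e') := by
      intro e' he'
      have hene : e' ≠ e := (Finset.mem_erase.mp he').1
      have : sumE η Ce (pert c) e' = sumE η Ce lam' e' := by
        rw [sumE, sumE]
        apply Finset.sum_congr rfl
        intro x _
        apply Finset.sum_congr rfl
        intro y _
        rw [eExp, eExp]
        have h0 : pert c e' 0 x = lam' e' 0 x := by
          simp [hpert, hene]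
        have h1 : pert c e' 1 y = lam' e' 1 y := by
          simp [hpert, hene]
        rw [h0, h1]
      rw [this]
    have hEsum : ∑ e', Real.log (sumE η Ce (pert c) e')
        = Real.log ((B - R) + R * Real.exp (-(η * c))) + CE := by
      rw [← Finset.add_sum_erase _ _ (Finset.mem_univ e), hsumEe,
        Finset.sum_congr rfl hsumEothers]
    rw [dualL]
    rw [show ∑ i, Real.log (∑ x, vExp η ends Ci (pert c) i x)
        = ∑ i, Real.log (sumV η ends Ci (pert c) i) from rfl]
    rw [show ∑ e', Real.log (∑ x₁, ∑ x₂, eExp η Ce (pert c) e' x₁ x₂)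
        = ∑ e', Real.log (sumE η Ce (pert c) e') from rfl]
    rw [hVsum, hEsum]
  -- local minimum at 0
  have hlm : IsLocalMin (fun c => dualL η ends Ci Ce (pert c)) 0 := by
    apply Filter.Eventually.of_forall
    intro c
    simp only [hpert0]
    exact hmin (pert c) (hagree c)
  -- derivative
  have hAne : (A - V) + V * Real.exp (η * 0) ≠ 0 := by
    simp only [mul_zero, Real.exp_zero, mul_one]
    rw [sub_add_cancel]
    exact hApos.ne'
  have hBne : (B - R) + R * Real.exp (-(η * 0)) ≠ 0 := by
    simp only [mul_zero, neg_zero, Real.exp_zero, mul_one]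
    rw [sub_add_cancel]
    exact hBpos.ne'
  have e1 : HasDerivAt (fun c : ℝ => η * c) η 0 := by
    simpa using (hasDerivAt_id (0:ℝ)).const_mul η
  have e2 : HasDerivAt (fun c : ℝ => Real.exp (η * c)) (Real.exp (η * 0) * η) 0 := e1.exp
  have e3 : HasDerivAt (fun c : ℝ => (A - V) + V * Real.exp (η * c))
      (V * (Real.exp (η * 0) * η)) 0 := (e2.const_mul V).const_add (A - V)
  have e4 : HasDerivAt (fun c : ℝ => Real.log ((A - V) + V * Real.exp (η * c)))
      (V * (Real.exp (η * 0) * η) / ((A - V) + V * Real.exp (η * 0))) 0 := e3.log hAne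
  have f1 : HasDerivAt (fun c : ℝ => -(η * c)) (-η) 0 := by
    exact e1.neg
  have f2 : HasDerivAt (fun c : ℝ => Real.exp (-(η * c))) (Real.exp (-(η * 0)) * (-η)) 0 := f1.exp
  have f3 : HasDerivAt (fun c : ℝ => (B - R) + R * Real.exp (-(η * c)))
      (R * (Real.exp (-(η * 0)) * (-η))) 0 := (f2.const_mul R).const_add (B - R)
  have f4 : HasDerivAt (fun c : ℝ => Real.log ((B - R) + R * Real.exp (-(η * c))))
      (R * (Real.exp (-(η * 0)) * (-η)) / ((B - R) + R * Real.exp (-(η * 0)))) 0 := f3.log hBne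
  have hD : HasDerivAt (fun c => dualL η ends Ci Ce (pert c))
      ((1/η) * (V * (Real.exp (η * 0) * η) / ((A - V) + V * Real.exp (η * 0)))
        + (1/η) * (R * (Real.exp (-(η * 0)) * (-η)) / ((B - R) + R * Real.exp (-(η * 0))))) 0 := by
    have hder := (((e4.add_const CV).const_mul (1/η)).add ((f4.add_const CE).const_mul (1/η)))
    have hfun : (fun c => dualL η ends Ci Ce (pert c))
        = fun c => (1/η) * (Real.log ((A - V) + V * Real.exp (η * c)) + CV)
            + (1/η) * (Real.log ((B - R) + R * Real.exp (-(η * c))) + CE) := by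
      funext c; exact hψ c
    rw [hfun]
    exact hder
  have hzero := hlm.hasDerivAt_eq_zero hD
  -- extract V/A = R/B
  have hVpos : 0 < V := vExp_pos _ _ _ _ _ _
  have hRpos : 0 < R := rowE_pos hd0 _ _ _ _ _ _
  simp only [mul_zero, neg_zero, Real.exp_zero, mul_one, one_mul, sub_add_cancel] at hzero
  have hkey : R / B = V / A := by
    have hηne : η ≠ 0 := hη.ne'
    field_simp at hzero
    have h2 : η * (V * B) = η * (R * A) := by rw [show V * B = R * A by linarith [hzero]]
    have h3 : V * B = R * A := mul_left_cancel₀ hηne h2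
    rw [div_eq_div_iff hBpos.ne' hApos.ne']
    linarith [h3]
  rw [Smarg_eq, ← hRdef, ← hBdef, hkey, muV, ← hVdef]
  rfl

set_option maxHeartbeats 1000000 in
lemma smp_matches (η : ℝ) (hη : 0 < η) (hd0 : 0 < d)
    (ends : Fin m → Fin n × Fin n) (hsimple : ∀ e, (ends e).1 ≠ (ends e).2)
    (Ci : Fin n → Fin d → ℝ) (Ce : Fin m → Fin d → Fin d → ℝ)
    (lam : Fin m → Fin 2 → Fin d → ℝ) (i₀ : Fin n) :
    ∀ e s, ep ends e s = i₀ → ∀ x,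
      Smarg η Ce (smpUpdate η ends Ci Ce lam i₀) e s x
        = muV η ends Ci (smpUpdate η ends Ci Ce lam i₀) i₀ x := by
  intro e s hes x
  haveI : Nonempty (Fin d) := ⟨⟨0, hd0⟩⟩
  classical
  set K : ℝ := ((nbhd ends i₀).card : ℝ) with hKdef
  have hKnn : (0:ℝ) ≤ K := by rw [hKdef]; positivity
  have hK1 : (0:ℝ) < K + 1 := by linarith
  set W : Fin d → ℝ := fun z => muV η ends Ci lam i₀ z *
      ∏ p ∈ nbhd ends i₀, Smarg η Ce lam p.1 p.2 z with hWdef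
  have hWpos : ∀ z, 0 < W z := fun z => mul_pos (muV_pos hd0 _ _ _ _ _ _)
    (Finset.prod_pos fun p _ => Smarg_pos hd0 _ _ _ _ _ _)
  set G : Fin d → ℝ := fun z => Real.exp ((1/(K+1)) * Real.log (W z)) with hGdef
  have hGpos : ∀ z, 0 < G z := fun z => Real.exp_pos _
  have hGsumpos : 0 < ∑ z, G z := Finset.sum_pos (fun z _ => hGpos z) univ_nonempty
  set lamS := smpUpdate η ends Ci Ce lam i₀ with hlamS
  have hdelta : ∀ e' s', ep ends e' s' = i₀ → ∀ x',
      lamS e' s' x' = lam e' s' x' + (1/η) * Real.log (Smarg η Ce lam e' s' x')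
        - (1/(η*(K+1))) * Real.log (W x') := by
    intro e' s' h x'
    rw [hlamS, smpUpdate, if_pos h]
  have hoff : ∀ e' s', ep ends e' s' ≠ i₀ → lamS e' s' = lam e' s' := by
    intro e' s' h
    funext x'
    rw [hlamS, smpUpdate, if_neg h]
  -- the exponential of the block shift
  have hexpdelta : ∀ e' s', ep ends e' s' = i₀ → ∀ z,
      Real.exp (η * (lam e' s' z - lamS e' s' z))
        = G z / Smarg η Ce lam e' s' z := by
    intro e' s' h z
    have hS := Smarg_pos hd0 η Ce lam e' s' z
    rw [hdelta e' s' h z, hGdef]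
    have harg : η * (lam e' s' z - (lam e' s' z + (1/η) * Real.log (Smarg η Ce lam e' s' z)
        - (1/(η*(K+1))) * Real.log (W z)))
        = (1/(K+1)) * Real.log (W z) - Real.log (Smarg η Ce lam e' s' z) := by
      field_simp
      ring
    rw [harg, Real.exp_sub, Real.exp_log hS]
  -- rows of the updated edge marginal
  have hrow : ∀ z, rowE η Ce lamS e s z = sumE η Ce lam e * G z := by
    intro z
    have hSz := Smarg_pos hd0 η Ce lam e s z
    have hrowfac : rowE η Ce lamS e s z
        = rowE η Ce lam e s z * Real.exp (η * (lam e s z - lamS e s z)) := by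
      rcases (by omega : s = 0 ∨ s = 1) with rfl | rfl
      · have hep1 : ep ends e 1 ≠ i₀ := by
          rw [ep_one]; rw [ep_zero] at hes; rw [← hes]; exact (hsimple e).symm
        rw [rowE, rowE, if_pos rfl, if_pos rfl, Finset.sum_mul]
        apply Finset.sum_congr rfl
        intro y _
        rw [eExp, eExp, ← Real.exp_add, Real.exp_eq_exp, hoff e 1 hep1]
        ring
      · have hep0 : ep ends e 0 ≠ i₀ := by
          rw [ep_zero]; rw [ep_one] at hes; rw [← hes]; exact hsimple e
        rw [rowE, rowE, if_neg (by decide : ¬(1:Fin 2) = 0),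
          if_neg (by decide : ¬(1:Fin 2) = 0), Finset.sum_mul]
        apply Finset.sum_congr rfl
        intro y _
        rw [eExp, eExp, ← Real.exp_add, Real.exp_eq_exp, hoff e 0 hep0]
        ring
    have hEne := (sumE_pos hd0 η Ce lam e).ne'
    have hrowS : rowE η Ce lam e s z = Smarg η Ce lam e s z * sumE η Ce lam e := by
      rw [Smarg_eq, div_mul_cancel₀ _ hEne]
    rw [hrowfac, hexpdelta e s hes z, hrowS]
    field_simp
  -- updated edge normalizer
  have hsumES : sumE η Ce lamS e = sumE η Ce lam e * ∑ z, G z := by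
    have hs2 : sumE η Ce lamS e = ∑ z, rowE η Ce lamS e s z := by
      rcases (by omega : s = 0 ∨ s = 1) with rfl | rfl
      · rw [sumE]
        apply Finset.sum_congr rfl
        intro z _
        rw [rowE, if_pos rfl]
      · rw [sumE, Finset.sum_comm]
        apply Finset.sum_congr rfl
        intro z _
        rw [rowE, if_neg (by decide : ¬(1:Fin 2) = 0)]
    rw [hs2, Finset.sum_congr rfl (fun z _ => hrow z), ← Finset.mul_sum]
  -- the updated marginal is G-normalized
  have hSm : Smarg η Ce lamS e s x = G x / ∑ z, G z := by
    rw [Smarg_eq, hrow x, hsumES,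
      mul_div_mul_left _ _ (sumE_pos hd0 η Ce lam e).ne']
  -- updated vertex factor
  have hvS : ∀ z, vExp η ends Ci lamS i₀ z = sumV η ends Ci lam i₀ * G z := by
    intro z
    have hsum : ∑ p ∈ nbhd ends i₀, lamS p.1 p.2 z
        = ∑ p ∈ nbhd ends i₀, lam p.1 p.2 z
          + (1/η) * ∑ p ∈ nbhd ends i₀, Real.log (Smarg η Ce lam p.1 p.2 z)
          - K * ((1/(η*(K+1))) * Real.log (W z)) := by
      have h1 : ∑ p ∈ nbhd ends i₀, lamS p.1 p.2 z
          = ∑ p ∈ nbhd ends i₀, (lam p.1 p.2 z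
              + (1/η) * Real.log (Smarg η Ce lam p.1 p.2 z)
              - (1/(η*(K+1))) * Real.log (W z)) :=
        Finset.sum_congr rfl (fun p hp => hdelta p.1 p.2 (Finset.mem_filter.mp hp).2 z)
      rw [h1, Finset.sum_sub_distrib, Finset.sum_add_distrib, ← Finset.mul_sum,
        Finset.sum_const, nsmul_eq_mul, ← hKdef]
    have hprodS : Real.exp (∑ p ∈ nbhd ends i₀, Real.log (Smarg η Ce lam p.1 p.2 z))
        = ∏ p ∈ nbhd ends i₀, Smarg η Ce lam p.1 p.2 z := by
      rw [Real.exp_sum]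
      exact Finset.prod_congr rfl fun p _ => Real.exp_log (Smarg_pos hd0 _ _ _ _ _ _)
    have hveq : vExp η ends Ci lamS i₀ z
        = vExp η ends Ci lam i₀ z
          * Real.exp (∑ p ∈ nbhd ends i₀, Real.log (Smarg η Ce lam p.1 p.2 z))
          * Real.exp (-(K/(K+1)) * Real.log (W z)) := by
      rw [vExp_nbhd, vExp_nbhd, hsum, ← Real.exp_add, ← Real.exp_add, Real.exp_eq_exp]
      field_simp
      ring
    rw [hveq, hprodS]
    have hvlam : vExp η ends Ci lam i₀ z = muV η ends Ci lam i₀ z * sumV η ends Ci lam i₀ := by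
      rw [muV, sumV, div_mul_cancel₀ _
        (show (∑ x' : Fin d, vExp η ends Ci lam i₀ x') ≠ 0 from
          (sumV_pos hd0 η ends Ci lam i₀).ne')]
    rw [hvlam]
    have hWz : muV η ends Ci lam i₀ z * (∏ p ∈ nbhd ends i₀, Smarg η Ce lam p.1 p.2 z) = W z := by
      rw [hWdef]
    have hGz : W z * Real.exp (-(K/(K+1)) * Real.log (W z)) = G z := by
      rw [hGdef]
      have : W z = Real.exp (Real.log (W z)) := (Real.exp_log (hWpos z)).symm
      nth_rewrite 1 [this]
      rw [← Real.exp_add]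
      congr 1
      field_simp
      ring
    calc muV η ends Ci lam i₀ z * sumV η ends Ci lam i₀
          * (∏ p ∈ nbhd ends i₀, Smarg η Ce lam p.1 p.2 z)
          * Real.exp (-(K/(K+1)) * Real.log (W z))
        = sumV η ends Ci lam i₀ * (W z * Real.exp (-(K/(K+1)) * Real.log (W z))) := by
          rw [← hWz]; ring
      _ = sumV η ends Ci lam i₀ * G z := by rw [hGz]
  have hmu : muV η ends Ci lamS i₀ x = G x / ∑ z, G z := by
    rw [muV, hvS x,
      Finset.sum_congr rfl (fun z _ => hvS z), ← Finset.mul_sum,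
      mul_div_mul_left _ _ (sumV_pos hd0 η ends Ci lam i₀).ne']
  rw [hSm, hmu]

/-- SMP fixed-point characterization: a block update `λ'` at vertex `i₀`
minimizes the dual objective over the block `{λ_{e,i₀}(x) : e ∈ N_{i₀}, x ∈ χ}`
if and only if `S_{e,i₀}^{λ'}(x) = μ_{i₀}^{λ'}(x)` for all `e ∈ N_{i₀}` and
`x ∈ χ`; moreover the explicit SMP update achieves this matching condition. -/
theorem smp_fixed_point (η : ℝ) (hη : 0 < η) (hd : 2 ≤ d)
    (ends : Fin m → Fin n × Fin n)
    (hsimple : ∀ e, (ends e).1 ≠ (ends e).2)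
    (Ci : Fin n → Fin d → ℝ) (Ce : Fin m → Fin d → Fin d → ℝ)
    (lam : Fin m → Fin 2 → Fin d → ℝ) (i₀ : Fin n) :
    (∀ lam' : Fin m → Fin 2 → Fin d → ℝ,
      (∀ e s x, ep ends e s ≠ i₀ → lam' e s x = lam e s x) →
      ((∀ lam'' : Fin m → Fin 2 → Fin d → ℝ,
          (∀ e s x, ep ends e s ≠ i₀ → lam'' e s x = lam e s x) →
          dualL η ends Ci Ce lam' ≤ dualL η ends Ci Ce lam'')
        ↔ (∀ e s, ep ends e s = i₀ → ∀ x,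
            Smarg η Ce lam' e s x = muV η ends Ci lam' i₀ x))) ∧
    (∀ e s, ep ends e s = i₀ → ∀ x,
      Smarg η Ce (smpUpdate η ends Ci Ce lam i₀) e s x
        = muV η ends Ci (smpUpdate η ends Ci Ce lam i₀) i₀ x) := by
  have hd0 : 0 < d := by omega
  constructor
  · intro lam' h'
    constructor
    · intro hmin
      exact matching_of_min η hη hd0 ends Ci Ce lam lam' i₀ h' hmin
    · intro hmatch lam'' h''
      exact dual_le_of_matching η hη hd0 ends hsimple Ci Ce lam lam' lam'' i₀ h' h'' hmatch
  · exact smp_matches η hη hd0 ends hsimple Ci Ce lam i₀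

end
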